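/- For integers p, q with |p|, |q| > 1, the group G = ⟨x, y | x^p = y^q⟩ contains a generalized torsion element, namely the commutator [x, y] = xyx⁻¹y⁻¹; in particular, some non-empty finite product of conjugates of [x, y] equals the identity while [x, y] ≠ 1. -/
import Mathlib


def pqRel (p q : ℤ) : Set (FreeGroup (Fin 2)) :=
  {FreeGroup.of 0 ^ p * (FreeGroup.of 1 ^ q)⁻¹}

def xg (p q : ℤ) : PresentedGroup (pqRel p q) := PresentedGroup.of 0
def yg (p q : ℤ) : PresentedGroup (pqRel p q) := PresentedGroup.of 1

/-- A wreath-product-like group `(ZMod n → ZMod m) ⋊ ZMod n`. -/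
structure Wr (m n : ℕ) where
  f : ZMod n → ZMod m
  t : ZMod n

namespace Wr

variable {m n : ℕ}

instance : Mul (Wr m n) := ⟨fun a b => ⟨fun i => a.f i + b.f (i - a.t), a.t + b.t⟩⟩
instance : One (Wr m n) := ⟨⟨fun _ => 0, 0⟩⟩
instance : Inv (Wr m n) := ⟨fun a => ⟨fun i => -a.f (i + a.t), -a.t⟩⟩

lemma mul_def (a b : Wr m n) :
    a * b = ⟨fun i => a.f i + b.f (i - a.t), a.t + b.t⟩ := rfl
lemma one_def : (1 : Wr m n) = ⟨fun _ => 0, 0⟩ := rfl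
lemma inv_def (a : Wr m n) : a⁻¹ = ⟨fun i => -a.f (i + a.t), -a.t⟩ := rfl

instance : Group (Wr m n) :=
  Group.ofLeftAxioms
    (fun a b c => by
      simp only [mul_def, mk.injEq]
      refine ⟨funext fun i => ?_, add_assoc _ _ _⟩
      simp [add_assoc, sub_sub])
    (fun a => by simp [mul_def, one_def])
    (fun a => by simp [mul_def, one_def, inv_def, sub_neg_eq_add])

/-- The "delta function" generator. -/
def A : Wr m n := ⟨fun i => if i = 0 then 1 else 0, 0⟩
/-- The "shift" generator. -/
def B : Wr m n := ⟨fun _ => 0, 1⟩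

lemma A_pow (k : ℕ) :
    (A : Wr m n) ^ k = ⟨fun i => if i = 0 then (k : ZMod m) else 0, 0⟩ := by
  induction k with
  | zero => simp [one_def]
  | succ k ih =>
      rw [pow_succ, ih, mul_def]
      simp only [A, mk.injEq]
      refine ⟨funext fun i => ?_, by simp⟩
      by_cases h : i = 0 <;> simp [h]

lemma B_pow (k : ℕ) : (B : Wr m n) ^ k = ⟨fun _ => 0, (k : ZMod n)⟩ := by
  induction k with
  | zero => simp [one_def]
  | succ k ih =>
      rw [pow_succ, ih, mul_def]
      simp [B]

lemma A_pow_m : (A : Wr m n) ^ m = 1 := by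
  rw [A_pow, one_def]
  simp [ZMod.natCast_self]

lemma B_pow_n : (B : Wr m n) ^ n = 1 := by
  rw [B_pow, one_def, ZMod.natCast_self]

lemma AB_ne_BA (hm : 1 < m) (hn : 1 < n) : (A : Wr m n) * B ≠ B * A := by
  haveI : Fact (1 < m) := ⟨hm⟩
  haveI : Fact (1 < n) := ⟨hn⟩
  intro h
  have h0 := congrArg (fun g : Wr m n => g.f 0) h
  simp only [mul_def, A, B, sub_zero, zero_sub, add_zero, zero_add] at h0
  rw [if_true, if_neg (fun hc : (-1 : ZMod n) = 0 =>
    (one_ne_zero (neg_eq_zero.mp hc)))] at h0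
  exact one_ne_zero h0

end Wr

lemma zpow_natAbs_eq_one {G : Type*} [Group G] (a : G) (p : ℤ)
    (h : a ^ p.natAbs = 1) : a ^ p = 1 := by
  rcases Int.natAbs_eq p with hp | hp
  · conv_lhs => rw [hp]
    rw [zpow_natCast]; exact h
  · conv_lhs => rw [hp]
    rw [zpow_neg, zpow_natCast, h, inv_one]

/-- key product-of-conjugates identity. -/
lemma conj_prod_eq {G : Type*} [Group G] (x y : G) (k : ℕ) :
    (List.ofFn (fun i : Fin k =>
      x ^ (k - 1 - (i : ℕ)) * (x * y * x⁻¹ * y⁻¹) * (x ^ (k - 1 - (i : ℕ)))⁻¹)).prod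
      = x ^ k * y * (x ^ k)⁻¹ * y⁻¹ := by
  induction k with
  | zero => simp
  | succ k ih =>
      rw [List.ofFn_succ]
      simp only [Fin.val_succ, Fin.val_zero, Nat.add_sub_cancel, Nat.sub_zero, Nat.sub_sub]
      have harg : ∀ i : Fin k, k - ((i : ℕ) + 1) = k - 1 - (i : ℕ) := fun i => by omega
      simp only [harg]
      rw [List.prod_cons, ih, pow_succ]
      group

theorem stmt8 (p q : ℤ) (hp : 1 < |p|) (hq : 1 < |q|) :
    (xg p q * yg p q * (xg p q)⁻¹ * (yg p q)⁻¹ ≠ 1) ∧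
    ∃ k : ℕ, 1 ≤ k ∧ ∃ xs : Fin k → PresentedGroup (pqRel p q),
      (List.ofFn (fun i =>
        xs i * (xg p q * yg p q * (xg p q)⁻¹ * (yg p q)⁻¹) * (xs i)⁻¹)).prod = 1 := by
  have hm2 : 1 < p.natAbs := by
    rw [Int.abs_eq_natAbs] at hp; exact_mod_cast hp
  have hn2 : 1 < q.natAbs := by
    rw [Int.abs_eq_natAbs] at hq; exact_mod_cast hq
  -- the quotient map kills the relator
  have hrel : (xg p q) ^ p = (yg p q) ^ q := by
    have h1 : PresentedGroup.mk (pqRel p q)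
        (FreeGroup.of 0 ^ p * (FreeGroup.of 1 ^ q)⁻¹) = 1 := by
      refine (QuotientGroup.eq_one_iff _).mpr ?_
      exact Subgroup.subset_normalClosure rfl
    rw [map_mul, map_inv, map_zpow, map_zpow] at h1
    rw [mul_inv_eq_one] at h1
    exact h1
  constructor
  · -- the commutator is nontrivial: map to Wr
    have hAh : ∀ r ∈ pqRel p q,
        FreeGroup.lift (![Wr.A, Wr.B] : Fin 2 → Wr p.natAbs q.natAbs) r = 1 := by
      intro r hr
      rw [Set.mem_singleton_iff.mp hr]
      rw [map_mul, map_inv, map_zpow, map_zpow, FreeGroup.lift_apply_of, FreeGroup.lift_apply_of]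
      have hA : (![Wr.A, Wr.B] 0 : Wr p.natAbs q.natAbs) ^ p = 1 :=
        zpow_natAbs_eq_one _ p (@Wr.A_pow_m p.natAbs q.natAbs)
      have hB : (![Wr.A, Wr.B] 1 : Wr p.natAbs q.natAbs) ^ q = 1 :=
        zpow_natAbs_eq_one _ q (@Wr.B_pow_n p.natAbs q.natAbs)
      rw [hA, hB, inv_one, mul_one]
    let φ := PresentedGroup.toGroup hAh
    intro hc
    have hφ := congrArg φ hc
    have hx : φ (xg p q) = Wr.A := PresentedGroup.toGroup.of hAh
    have hy : φ (yg p q) = Wr.B := PresentedGroup.toGroup.of hAh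
    rw [map_mul, map_mul, map_mul, map_inv, map_inv, map_one, hx, hy] at hφ
    have : (Wr.A : Wr p.natAbs q.natAbs) * Wr.B = Wr.B * Wr.A := by
      calc Wr.A * Wr.B = (Wr.A * Wr.B * Wr.A⁻¹ * Wr.B⁻¹) * (Wr.B * Wr.A) := by group
        _ = Wr.B * Wr.A := by rw [hφ, one_mul]
    exact Wr.AB_ne_BA hm2 hn2 this
  · -- product of conjugates is trivial
    refine ⟨p.natAbs, by omega, fun i => (xg p q) ^ (p.natAbs - 1 - (i : ℕ)), ?_⟩
    rw [conj_prod_eq]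
    have hcomm : Commute ((xg p q) ^ (p.natAbs : ℕ)) (yg p q) := by
      have h1 : Commute ((yg p q) ^ q) (yg p q) := (Commute.refl _).zpow_left q
      have h2 : Commute ((xg p q) ^ p) (yg p q) := by rw [hrel]; exact h1
      rcases Int.natAbs_eq p with h | h
      · have hx : (xg p q) ^ (p.natAbs : ℕ) = (xg p q) ^ p := by
          rw [← zpow_natCast, show ((p.natAbs : ℤ)) = p by omega]
        rw [hx]; exact h2
      · have hx : (xg p q) ^ (p.natAbs : ℕ) = ((xg p q) ^ p)⁻¹ := by
          rw [← zpow_natCast, show ((p.natAbs : ℤ)) = -p by omega, zpow_neg]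
        rw [hx]; exact h2.inv_left
    rw [hcomm.eq]
    group
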